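/- If G and H are isoclinic finite groups, then P_r(G) = P_r(H) for all r ≥ 2. -/

import Mathlib

/-- The set of `r`-tuples of pairwise commuting elements of `G`. -/
def CommTuple (r : ℕ) (G : Type*) [Group G] : Type _ :=
  {x : Fin r → G // ∀ i j, Commute (x i) (x j)}

/-- `P r G = |Comm_r(G)| / |G|^r`. -/
noncomputable def P (r : ℕ) (G : Type*) [Group G] : ℝ :=
  (Nat.card (CommTuple r G) : ℝ) / (Nat.card G : ℝ) ^ r

open scoped commutatorElement

/-- Isoclinism of groups, à la P. Hall. -/
structure Isoclinic (G H : Type*) [Group G] [Group H] where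
  φ : G ⧸ Subgroup.center G ≃* H ⧸ Subgroup.center H
  ψ : commutator G ≃* commutator H
  compat : ∀ (g₁ g₂ : G) (h₁ h₂ : H),
    φ (QuotientGroup.mk g₁) = QuotientGroup.mk h₁ →
    φ (QuotientGroup.mk g₂) = QuotientGroup.mk h₂ →
    (ψ ⟨⁅g₁, g₂⁆,
        Subgroup.commutator_mem_commutator (Subgroup.mem_top _) (Subgroup.mem_top _)⟩ : H)
      = ⁅h₁, h₂⁆

/-- Tuples of central cosets whose representatives pairwise commute. -/
def QComm (r : ℕ) (G : Type*) [Group G] : Type _ :=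
  {x : Fin r → G ⧸ Subgroup.center G // ∀ i j, Commute (x i).out (x j).out}

lemma commute_of_center {G : Type*} [Group G] {a a' b b' : G}
    (ha : a⁻¹ * a' ∈ Subgroup.center G) (hb : b⁻¹ * b' ∈ Subgroup.center G)
    (h : Commute a b) : Commute a' b' := by
  have ha' := Subgroup.mem_center_iff.mp ha
  have hb' := Subgroup.mem_center_iff.mp hb
  have e1 : a' = a * (a⁻¹ * a') := by group
  have e2 : b' = b * (b⁻¹ * b') := by group
  rw [e1, e2]
  have c1 : Commute a (a⁻¹ * a') := ha' a
  have c2 : Commute b (a⁻¹ * a') := ha' b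
  have c3 : Commute a (b⁻¹ * b') := hb' a
  have c4 : Commute (a⁻¹ * a') (b⁻¹ * b') := hb' _
  exact (h.mul_right c3).mul_left (c2.symm.mul_right c4)

lemma mem_center_inv_swap {G : Type*} [Group G] {a a' : G}
    (ha : a⁻¹ * a' ∈ Subgroup.center G) : a'⁻¹ * a ∈ Subgroup.center G := by
  have := (Subgroup.center G).inv_mem ha
  rwa [mul_inv_rev, inv_inv] at this

lemma commute_iff_center {G : Type*} [Group G] {a a' b b' : G}
    (ha : a⁻¹ * a' ∈ Subgroup.center G) (hb : b⁻¹ * b' ∈ Subgroup.center G) :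
    Commute a b ↔ Commute a' b' :=
  ⟨commute_of_center ha hb,
   commute_of_center (mem_center_inv_swap ha) (mem_center_inv_swap hb)⟩

lemma mk_out {G : Type*} [Group G] (x : G ⧸ Subgroup.center G) :
    QuotientGroup.mk x.out = x := Quotient.out_eq' x

lemma out_mem_center {G : Type*} [Group G] (g : G) :
    g⁻¹ * ((g : G ⧸ Subgroup.center G)).out ∈ Subgroup.center G := by
  rw [← QuotientGroup.eq]
  exact (mk_out _).symm

/-- The fibration of commuting tuples over commuting coset tuples. -/
noncomputable def tupleEquiv (r : ℕ) (G : Type*) [Group G] :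
    CommTuple r G ≃ QComm r G × (Fin r → Subgroup.center G) where
  toFun g :=
    ⟨⟨fun i => (g.1 i : G ⧸ Subgroup.center G), fun i j =>
        commute_of_center (out_mem_center _) (out_mem_center _) (g.2 i j)⟩,
     fun i => ⟨((g.1 i : G ⧸ Subgroup.center G)).out⁻¹ * g.1 i,
        mem_center_inv_swap (out_mem_center _)⟩⟩
  invFun x :=
    ⟨fun i => (x.1.1 i).out * (x.2 i : G), fun i j => by
      refine commute_of_center ?_ ?_ (x.1.2 i j) <;>
      · simp only [inv_mul_cancel_left]
        exact (x.2 _).2⟩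
  left_inv g := by
    apply Subtype.ext
    funext i
    simp
  right_inv x := by
    have key : ∀ i, (((x.1.1 i).out * (x.2 i : G) : G) : G ⧸ Subgroup.center G)
        = x.1.1 i := by
      intro i
      rw [QuotientGroup.mk_mul]
      have : ((x.2 i : G) : G ⧸ Subgroup.center G) = 1 :=
        (QuotientGroup.eq_one_iff _).mpr (x.2 i).2
      rw [this, mul_one, mk_out]
    refine Prod.ext (Subtype.ext (funext fun i => key i)) (funext fun i => ?_)
    apply Subtype.ext
    simp only [key i]
    group
    
lemma card_commTuple (r : ℕ) (G : Type*) [Group G] [Fintype G] :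
    Nat.card (CommTuple r G) =
      Nat.card (QComm r G) * Nat.card (Subgroup.center G) ^ r := by
  rw [Nat.card_congr (tupleEquiv r G), Nat.card_prod, Nat.card_fun]
  simp

lemma P_eq (r : ℕ) (G : Type*) [Group G] [Fintype G] :
    P r G = (Nat.card (QComm r G) : ℝ) / (Nat.card (G ⧸ Subgroup.center G) : ℝ) ^ r := by
  have hz : (0 : ℝ) < Nat.card (Subgroup.center G) := by
    exact_mod_cast Nat.card_pos
  rw [P, card_commTuple,
    Subgroup.card_eq_card_quotient_mul_card_subgroup (Subgroup.center G)]
  push_cast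
  rw [mul_pow, mul_div_mul_right _ _ (by positivity)]

lemma key_commute {G H : Type*} [Group G] [Group H] (e : Isoclinic G H)
    (x y : G ⧸ Subgroup.center G) :
    Commute x.out y.out ↔ Commute (e.φ x).out (e.φ y).out := by
  have h := e.compat x.out y.out (e.φ x).out (e.φ y).out
    (by rw [mk_out, mk_out])
    (by rw [mk_out, mk_out])
  rw [← commutatorElement_eq_one_iff_commute, ← commutatorElement_eq_one_iff_commute, ← h,
    OneMemClass.coe_eq_one, EmbeddingLike.map_eq_one_iff]
  exact ⟨fun h' => Subtype.ext h', fun h' => congrArg Subtype.val h'⟩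

/-- Isoclinism gives a bijection of commuting coset tuples. -/
noncomputable def qcommEquiv (r : ℕ) {G H : Type*} [Group G] [Group H]
    (e : Isoclinic G H) : QComm r G ≃ QComm r H where
  toFun x := ⟨fun i => e.φ (x.1 i), fun i j => (key_commute e _ _).mp (x.2 i j)⟩
  invFun y := ⟨fun i => e.φ.symm (y.1 i), fun i j => by
    have h := key_commute e (e.φ.symm (y.1 i)) (e.φ.symm (y.1 j))
    rw [e.φ.apply_symm_apply, e.φ.apply_symm_apply] at h
    exact h.mpr (y.2 i j)⟩
  left_inv x := Subtype.ext (funext fun i => e.φ.symm_apply_apply _)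
  right_inv y := Subtype.ext (funext fun i => e.φ.apply_symm_apply _)

theorem stmt13 (G H : Type*) [Group G] [Group H] [Fintype G] [Fintype H]
    (h : Nonempty (Isoclinic G H)) (r : ℕ) (hr : 2 ≤ r) :
    P r G = P r H := by
  obtain ⟨e⟩ := h
  rw [P_eq, P_eq, Nat.card_congr (qcommEquiv r e), Nat.card_congr e.φ.toEquiv]
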